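/- Let F be a field and let λ = (m₁,m₂,m₃), μ = (m₁',m₂',m₃') ∈ ℤ³ both be dominant (m₁ ≥ m₂ ≥ m₃ and m₁' ≥ m₂' ≥ m₃'). Then the inclusion SL₃(F[[t]]) ∩ t^λ SL₃(F[[t]]) t^{-λ} ⊆ SL₃(F[[t]]) ∩ t^μ SL₃(F[[t]]) t^{-μ} (of subsets of SL₃(F((t)))) holds if and only if m_i − m_j ≥ m_i' − m_j' for all i < j, i.e. if and only if λ − μ is dominant. -/

import Mathlib

noncomputable section

open HahnSeries

/-- `t` as a unit of the formal Laurent series ring `F((t))`. -/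
def tUnitL (R : Type*) [CommRing R] : (LaurentSeries R)ˣ where
  val := HahnSeries.single (1 : ℤ) (1 : R)
  inv := HahnSeries.single (-1 : ℤ) (1 : R)
  val_inv := by
    rw [HahnSeries.single_mul_single, add_neg_cancel, one_mul, HahnSeries.single_zero_one]
  inv_val := by
    rw [HahnSeries.single_mul_single, neg_add_cancel, one_mul, HahnSeries.single_zero_one]

/-- The diagonal matrix `t^λ = diag(t^{m₁}, t^{m₂}, t^{m₃})` over `F((t))`,
for `λ = (m₁, m₂, m₃) ∈ ℤ³`. -/
def tDiag (R : Type*) [CommRing R] (m : Fin 3 → ℤ) :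
    Matrix (Fin 3) (Fin 3) (LaurentSeries R) :=
  Matrix.diagonal fun i => ((tUnitL R ^ m i : (LaurentSeries R)ˣ) : LaurentSeries R)

/-- `SL₃(F[[t]])`, as a subset of the 3×3 matrices over `F((t))`. -/
def SLO (F : Type*) [Field F] : Set (Matrix (Fin 3) (Fin 3) (LaurentSeries F)) :=
  {A | (∀ i j, A i j ∈ (HahnSeries.ofPowerSeries ℤ F).range) ∧ A.det = 1}

/-- `t^λ SL₃(F[[t]]) t^{−λ}`, as a subset of the 3×3 matrices over `F((t))`. -/
def tConjSLO (F : Type*) [Field F] (m : Fin 3 → ℤ) :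
    Set (Matrix (Fin 3) (Fin 3) (LaurentSeries F)) :=
  {A | ∃ B ∈ SLO F, A = tDiag F m * B * tDiag F (fun i => -(m i))}

namespace St6Aux

variable (F : Type*) [Field F]

lemma tUnitL_zpow (k : ℤ) :
    ((tUnitL F ^ k : (LaurentSeries F)ˣ) : LaurentSeries F) = HahnSeries.single k (1 : F) := by
  induction k using Int.induction_on with
  | zero => show (1 : LaurentSeries F) = _; rw [← HahnSeries.single_zero_one]
  | succ n ih =>
      rw [zpow_add_one, Units.val_mul, ih]
      show _ * HahnSeries.single (1 : ℤ) (1 : F) = _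
      rw [HahnSeries.single_mul_single, mul_one]
  | pred n ih =>
      rw [zpow_sub_one, Units.val_mul, ih]
      show _ * HahnSeries.single (-1 : ℤ) (1 : F) = _
      rw [HahnSeries.single_mul_single, mul_one, sub_eq_add_neg]

lemma mem_range_iff (x : LaurentSeries F) :
    x ∈ (HahnSeries.ofPowerSeries ℤ F).range ↔ ∀ n : ℤ, n < 0 → x.coeff n = 0 := by
  constructor
  · rintro ⟨f, rfl⟩ n hn
    rw [HahnSeries.ofPowerSeries_apply, HahnSeries.embDomain_notin_range]
    simp only [Set.mem_range, RelEmbedding.coe_mk, Function.Embedding.coeFn_mk]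
    rintro ⟨m, rfl⟩
    exact absurd hn (not_lt.mpr (Int.natCast_nonneg m))
  · intro h
    refine ⟨PowerSeries.mk (fun m => x.coeff (m : ℤ)), ?_⟩
    ext n
    rcases lt_or_ge n 0 with hn | hn
    · rw [h n hn, HahnSeries.ofPowerSeries_apply, HahnSeries.embDomain_notin_range]
      simp only [Set.mem_range, RelEmbedding.coe_mk, Function.Embedding.coeFn_mk]
      rintro ⟨m, rfl⟩
      exact absurd hn (not_lt.mpr (Int.natCast_nonneg m))
    · obtain ⟨m, rfl⟩ := Int.eq_ofNat_of_zero_le hn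
      rw [HahnSeries.ofPowerSeries_apply_coeff, PowerSeries.coeff_mk]

lemma single_one_mul_coeff (k n : ℤ) (x : LaurentSeries F) :
    (HahnSeries.single k (1 : F) * x).coeff n = x.coeff (n - k) := by
  have h := HahnSeries.coeff_single_mul_add (r := (1 : F)) (x := x) (a := n - k) (b := k)
  rw [one_mul, show n - k + k = n by ring] at h
  exact h

lemma tDiag_mul_neg (m : Fin 3 → ℤ) :
    tDiag F m * tDiag F (fun i => -(m i)) = 1 := by
  rw [tDiag, tDiag, Matrix.diagonal_mul_diagonal]
  have : (fun i => ((tUnitL F ^ m i : (LaurentSeries F)ˣ) : LaurentSeries F) *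
      ((tUnitL F ^ (-(m i)) : (LaurentSeries F)ˣ) : LaurentSeries F)) = fun _ => 1 := by
    funext i
    rw [← Units.val_mul, ← zpow_add, add_neg_cancel, zpow_zero, Units.val_one]
  rw [this, Matrix.diagonal_one]

lemma tDiag_neg_mul (m : Fin 3 → ℤ) :
    tDiag F (fun i => -(m i)) * tDiag F m = 1 := by
  rw [tDiag, tDiag, Matrix.diagonal_mul_diagonal]
  have : (fun i => ((tUnitL F ^ (-(m i)) : (LaurentSeries F)ˣ) : LaurentSeries F) *
      ((tUnitL F ^ m i : (LaurentSeries F)ˣ) : LaurentSeries F)) = fun _ => 1 := by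
    funext i
    rw [← Units.val_mul, ← zpow_add, neg_add_cancel, zpow_zero, Units.val_one]
  rw [this, Matrix.diagonal_one]

lemma tConj_entry (m : Fin 3 → ℤ) (B : Matrix (Fin 3) (Fin 3) (LaurentSeries F)) (i j : Fin 3) :
    (tDiag F m * B * tDiag F (fun i => -(m i))) i j =
      HahnSeries.single (m i - m j) (1 : F) * B i j := by
  rw [tDiag, tDiag, Matrix.mul_diagonal, Matrix.diagonal_mul, tUnitL_zpow, tUnitL_zpow,
    mul_right_comm, HahnSeries.single_mul_single, mul_one, ← sub_eq_add_neg]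

lemma mem_tConjSLO_iff (m : Fin 3 → ℤ) (A : Matrix (Fin 3) (Fin 3) (LaurentSeries F)) :
    A ∈ tConjSLO F m ↔
      (∀ i j, ∀ n : ℤ, n < m i - m j → (A i j).coeff n = 0) ∧ A.det = 1 := by
  constructor
  · rintro ⟨B, ⟨hBr, hBdet⟩, rfl⟩
    constructor
    · intro i j n hn
      rw [tConj_entry, single_one_mul_coeff]
      exact (mem_range_iff F _).mp (hBr i j) _ (by omega)
    · rw [Matrix.det_mul, Matrix.det_mul, mul_right_comm, ← Matrix.det_mul,
        tDiag_mul_neg, Matrix.det_one, one_mul, hBdet]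
  · rintro ⟨hcoeff, hdet⟩
    refine ⟨tDiag F (fun i => -(m i)) * A * tDiag F m, ⟨⟨fun i j => ?_, ?_⟩, ?_⟩⟩
    · rw [mem_range_iff]
      intro n hn
      have : (tDiag F (fun i => -(m i)) * A * tDiag F m) i j =
          HahnSeries.single (-(m i) - -(m j)) (1 : F) * A i j := by
        have := tConj_entry F (fun i => -(m i)) A i j
        simpa using this
      rw [this, single_one_mul_coeff]
      exact hcoeff i j _ (by omega)
    · rw [Matrix.det_mul, Matrix.det_mul, mul_right_comm, ← Matrix.det_mul,
        tDiag_neg_mul, Matrix.det_one, one_mul, hdet]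
    · simp only [← Matrix.mul_assoc]
      rw [tDiag_mul_neg, Matrix.one_mul, Matrix.mul_assoc, tDiag_mul_neg, Matrix.mul_one]

lemma anti3 {f : Fin 3 → ℤ} (h01 : f 1 ≤ f 0) (h12 : f 2 ≤ f 1) :
    ∀ i j : Fin 3, i ≤ j → f j ≤ f i := by
  intro i j hij
  fin_cases i <;> fin_cases j <;> simp_all <;> try omega

lemma single_mem_range {k : ℤ} (hk : 0 ≤ k) :
    HahnSeries.single k (1 : F) ∈ (HahnSeries.ofPowerSeries ℤ F).range := by
  rw [mem_range_iff]
  intro n hn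
  rw [HahnSeries.coeff_single_of_ne (by omega)]

end St6Aux

open St6Aux

/-- For dominant `λ`, `μ` one has
`SL₃(F[[t]]) ∩ t^λ SL₃(F[[t]]) t^{−λ} ⊆ SL₃(F[[t]]) ∩ t^μ SL₃(F[[t]]) t^{−μ}`
if and only if `mᵢ − mⱼ ≥ mᵢ' − mⱼ'` for all `i < j`, i.e. iff `λ − μ` is dominant. -/
theorem statement6 (F : Type*) [Field F] (lam mu : Fin 3 → ℤ)
    (hlam01 : lam 1 ≤ lam 0) (hlam12 : lam 2 ≤ lam 1)
    (hmu01 : mu 1 ≤ mu 0) (hmu12 : mu 2 ≤ mu 1) :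
    SLO F ∩ tConjSLO F lam ⊆ SLO F ∩ tConjSLO F mu ↔
      ∀ i j : Fin 3, i < j → mu i - mu j ≤ lam i - lam j := by
  constructor
  · intro hsub i j hij
    have hne : i ≠ j := ne_of_lt hij
    set c : ℤ := lam i - lam j with hc
    have hc0 : 0 ≤ c := by
      have := anti3 hlam01 hlam12 i j (le_of_lt hij)
      omega
    set A : Matrix (Fin 3) (Fin 3) (LaurentSeries F) :=
      (1 : Matrix (Fin 3) (Fin 3) (LaurentSeries F)) +
        Matrix.single i j (HahnSeries.single c (1 : F)) with hA
    have hAij : A i j = HahnSeries.single c (1 : F) := by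
      simp [hA, Matrix.one_apply, Matrix.single, hne]
    have hAdet : A.det = 1 := by
      have htri : A.BlockTriangular id := by
        intro a b hab
        have h1 : ¬(i = a ∧ j = b) := by
          rintro ⟨rfl, rfl⟩
          exact absurd hij (not_lt_of_gt hab)
        have h2 : ¬a = b := by
          intro hh
          exact absurd hab (by rw [hh]; exact lt_irrefl _)
        simp [hA, Matrix.one_apply, Matrix.single, h1, h2]
      rw [Matrix.det_of_upperTriangular htri]
      have hdiag : ∀ k : Fin 3, A k k = 1 := by
        intro k
        have : ¬(i = k ∧ j = k) := by
          rintro ⟨rfl, rfl⟩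
          exact hne rfl
        simp [hA, Matrix.one_apply, Matrix.single, this]
      simp [hdiag]
    have hAmem : A ∈ SLO F ∩ tConjSLO F lam := by
      constructor
      · refine ⟨fun a b => ?_, hAdet⟩
        by_cases h : i = a ∧ j = b
        · obtain ⟨rfl, rfl⟩ := h
          rw [hAij]
          exact single_mem_range F hc0
        · rcases eq_or_ne a b with rfl | hab
          · have hone : A a a = 1 := by
              simp [hA, Matrix.one_apply, Matrix.single, h]
            rw [hone]
            exact ⟨1, map_one _⟩
          · have hzero : A a b = 0 := by
              simp [hA, Matrix.one_apply, Matrix.single, h, hab]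
            rw [hzero]
            exact ⟨0, map_zero _⟩
      · rw [mem_tConjSLO_iff]
        refine ⟨?_, hAdet⟩
        intro a b n hn
        by_cases h : i = a ∧ j = b
        · obtain ⟨rfl, rfl⟩ := h
          rw [hAij]
          rw [HahnSeries.coeff_single_of_ne (by omega)]
        · rcases eq_or_ne a b with rfl | hab
          · have : A a a = 1 := by
              simp [hA, Matrix.one_apply, Matrix.single, h]
            rw [this]
            rw [HahnSeries.coeff_one, if_neg (by omega)]
          · have : A a b = 0 := by
              simp [hA, Matrix.one_apply, Matrix.single, h, hab]
            rw [this, HahnSeries.coeff_zero]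
    have hmem := (hsub hAmem).2
    rw [mem_tConjSLO_iff] at hmem
    by_contra hcon
    push_neg at hcon
    have := hmem.1 i j c (by omega)
    rw [hAij, HahnSeries.coeff_single_same] at this
    exact one_ne_zero this
  · rintro h A ⟨hASLO, hAlam⟩
    refine ⟨hASLO, ?_⟩
    rw [mem_tConjSLO_iff] at hAlam ⊢
    refine ⟨?_, hAlam.2⟩
    intro i j n hn
    rcases lt_trichotomy i j with hij | rfl | hij
    · have := h i j hij
      exact hAlam.1 i j n (by omega)
    · exact (mem_range_iff F _).mp (hASLO.1 i i) n (by omega)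
    · have := anti3 hmu01 hmu12 j i (le_of_lt hij)
      exact (mem_range_iff F _).mp (hASLO.1 i j) n (by omega)
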